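/- Let s, u, m be points in the Euclidean plane with s ≠ u and m ≠ u, let r be a unit vector, and let 0 ≤ β < π/2. If ⟪r, m − u⟫ = 0 (the segment from u to m is perpendicular to r) and the angle between u − s and r is at most β, then sin(∠ s u m) ≥ cos β, where ∠ s u m is the angle at vertex u. -/

import Mathlib

open Real EuclideanGeometry RealInnerProductSpace

/-- The angle estimate from the proof of the paper's Lemma 3: if the segment `u m` is
perpendicular to a unit vector `r` and the angle between `u - s` and `r` is at most
`β < π/2`, then `sin (∠ s u m) ≥ cos β`. -/
theorem sin_angle_ge_cos
    (s u m : EuclideanSpace ℝ (Fin 2))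
    (hsu : s ≠ u) (hmu : m ≠ u)
    (r : EuclideanSpace ℝ (Fin 2)) (hr : ‖r‖ = 1)
    (β : ℝ) (hβ0 : 0 ≤ β) (hβ : β < Real.pi / 2)
    (hperp : ⟪r, m - u⟫ = 0)
    (hangle : InnerProductGeometry.angle (u - s) r ≤ β) :
    Real.sin (∠ s u m) ≥ Real.cos β := by
  set v : EuclideanSpace ℝ (Fin 2) := s - u with hv
  set w : EuclideanSpace ℝ (Fin 2) := m - u with hw
  have hv0 : v ≠ 0 := sub_ne_zero.mpr hsu
  have hw0 : w ≠ 0 := sub_ne_zero.mpr hmu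
  have hvn : ‖v‖ ≠ 0 := norm_ne_zero_iff.mpr hv0
  have hwn : ‖w‖ ≠ 0 := norm_ne_zero_iff.mpr hw0
  set w' : EuclideanSpace ℝ (Fin 2) := ‖w‖⁻¹ • w with hw'
  have hw'n : ‖w'‖ = 1 := by
    rw [hw', norm_smul, norm_inv, norm_norm, inv_mul_cancel₀ hwn]
  -- orthonormal family
  have hwr : ⟪w, r⟫ = 0 := by rw [real_inner_comm]; exact hperp
  have hon : Orthonormal ℝ ![r, w'] := by
    refine ⟨fun i => ?_, fun {i j} hij => ?_⟩
    · fin_cases i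
      · exact hr
      · exact hw'n
    · fin_cases i <;> fin_cases j
      · exact absurd rfl hij
      · show ⟪r, w'⟫ = 0
        rw [hw', real_inner_smul_right, hperp, mul_zero]
      · show ⟪w', r⟫ = 0
        rw [hw', real_inner_smul_left, hwr, mul_zero]
      · exact absurd rfl hij
  have hcard : Fintype.card (Fin 2) = Module.finrank ℝ (EuclideanSpace ℝ (Fin 2)) := by
    simp [finrank_euclideanSpace]
  let b : OrthonormalBasis (Fin 2) ℝ (EuclideanSpace ℝ (Fin 2)) :=
    (basisOfOrthonormalOfCardEqFinrank hon hcard).toOrthonormalBasis (by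
      rwa [coe_basisOfOrthonormalOfCardEqFinrank])
  have hb0 : b 0 = r := by
    simp [b, Module.Basis.coe_toOrthonormalBasis, coe_basisOfOrthonormalOfCardEqFinrank]
  have hb1 : b 1 = w' := by
    simp [b, Module.Basis.coe_toOrthonormalBasis, coe_basisOfOrthonormalOfCardEqFinrank]
  -- Parseval
  have hpar : ⟪v, r⟫ ^ 2 + ⟪v, w'⟫ ^ 2 = ‖v‖ ^ 2 := by
    have := b.sum_inner_mul_inner v v
    rw [Fin.sum_univ_two, hb0, hb1] at this
    rw [← real_inner_self_eq_norm_sq, ← this]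
    rw [real_inner_comm r v, real_inner_comm w' v]; ring
  have hvw' : ⟪v, w⟫ = ‖w‖ * ⟪v, w'⟫ := by
    rw [hw', real_inner_smul_right]; field_simp
  -- sin of the angle
  have hA : ∠ s u m = InnerProductGeometry.angle v w := rfl
  have hcosA : Real.cos (∠ s u m) = ⟪v, w'⟫ / ‖v‖ := by
    rw [hA, InnerProductGeometry.cos_angle, hvw']
    field_simp
  have hsinA : Real.sin (∠ s u m) = |⟪v, r⟫| / ‖v‖ := by
    have h1 : Real.sin (∠ s u m) = Real.sqrt (1 - Real.cos (∠ s u m) ^ 2) := by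
      rw [Real.sin_eq_sqrt_one_sub_cos_sq]
      · exact InnerProductGeometry.angle_nonneg _ _
      · exact InnerProductGeometry.angle_le_pi _ _
    rw [h1, hcosA]
    have : 1 - (⟪v, w'⟫ / ‖v‖) ^ 2 = (|⟪v, r⟫| / ‖v‖) ^ 2 := by
      rw [div_pow, div_pow, sq_abs, eq_div_iff (pow_ne_zero 2 hvn), sub_mul, one_mul,
        div_mul_cancel₀ _ (pow_ne_zero 2 hvn)]
      linarith [hpar]
    rw [this, Real.sqrt_sq (by positivity)]
  -- angle bound
  have hcosb : Real.cos (InnerProductGeometry.angle (u - s) r) ≥ Real.cos β := by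
    apply Real.cos_le_cos_of_nonneg_of_le_pi (InnerProductGeometry.angle_nonneg _ _)
      (le_trans hβ.le (by linarith [Real.pi_pos])) hangle
  have husr : Real.cos (InnerProductGeometry.angle (u - s) r) = -⟪v, r⟫ / ‖v‖ := by
    rw [InnerProductGeometry.cos_angle, hr]
    have : u - s = -v := by rw [hv]; abel
    rw [this, inner_neg_left, norm_neg, mul_one]
  rw [hsinA]
  rw [husr] at hcosb
  have : -⟪v, r⟫ / ‖v‖ ≤ |⟪v, r⟫| / ‖v‖ := by
    apply div_le_div_of_nonneg_right (neg_le_abs _) (by positivity)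
  linarith
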